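/- The martingale M*_t := α(t)·H_t^(−(1−γ)/γ) − ∫₀ᵗ E_s H_s ds − β(t)·E_t·H_t, with α(t) = (x+P_T)·exp(−((1−γ)/γ)(r + θ²/(2γ))t), β(t) = (e^{κ(T−t)} − 1)/κ, κ = μ − r − ηθ, has Itô differential dM*_t = [(θ − η)β(t)E_t H_t + ((1−γ)/γ)θ·α(t)·H_t^(−(1−γ)/γ)] dW_t, i.e. the drift terms cancel. -/

import Mathlib

open Real

/-- Itô computation for `M*_t = α(t) H_t^(-(1-γ)/γ) - ∫₀ᵗ E_s H_s ds - β(t) E_t H_t`: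
writing `f t h e = α t * h^(-(1-γ)/γ) - β t * e * h` (the accumulated-endowment term
contributes `-e h` to the drift), the Itô drift obtained from
`dH = -r H dt - θ H dW`, `dE = μ E dt + η E dW` vanishes, and the diffusion coefficient
equals `(θ - η) β(t) E H + ((1-γ)/γ) θ α(t) H^(-(1-γ)/γ)`. -/
theorem ito_drift_cancellation (γ r θ μ η T x PT : ℝ)
    (hγ : 0 < γ) (hγ1 : γ ≠ 1) (hη : 0 < η) (hT : 0 < T)
    (hκ : μ - r - η * θ ≠ 0)
    (α β : ℝ → ℝ)
    (hα : ∀ t, α t = (x + PT) * exp (-((1 - γ) / γ) * (r + θ ^ 2 / (2 * γ)) * t))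
    (hβ : ∀ t, β t = (exp ((μ - r - η * θ) * (T - t)) - 1) / (μ - r - η * θ))
    (f : ℝ → ℝ → ℝ → ℝ)
    (hf : ∀ t h e, f t h e = α t * h ^ (-(1 - γ) / γ) - β t * e * h) :
    ∀ t ∈ Set.Icc (0 : ℝ) T, ∀ h e : ℝ, 0 < h → 0 < e →
      (deriv (fun t' => f t' h e) t - e * h
          + (-r * h) * deriv (fun h' => f t h' e) h
          + μ * e * deriv (fun e' => f t h e') e
          + 1 / 2 * θ ^ 2 * h ^ 2 * deriv (fun h' => deriv (fun h'' => f t h'' e) h') h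
          + 1 / 2 * η ^ 2 * e ^ 2 * deriv (fun e' => deriv (fun e'' => f t h e'') e') e
          + (-θ * h) * (η * e) * deriv (fun e' => deriv (fun h' => f t h' e') h) e
        = 0) ∧
      ((-θ * h) * deriv (fun h' => f t h' e) h + η * e * deriv (fun e' => f t h e') e
        = (θ - η) * β t * e * h + (1 - γ) / γ * θ * α t * h ^ (-(1 - γ) / γ)) := by
  intro t _ h e hh he
  have hγ0 : γ ≠ 0 := hγ.ne'
  set p : ℝ := -(1 - γ) / γ with hpdef
  set κ : ℝ := μ - r - η * θ with hkdef
  set c : ℝ := -((1 - γ) / γ) * (r + θ ^ 2 / (2 * γ)) with hcdef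
  have hαe : α = fun t' => (x + PT) * exp (c * t') := funext fun t' => hα t'
  have hβe : β = fun t' => (exp (κ * (T - t')) - 1) / κ := funext fun t' => hβ t'
  -- derivative of α
  have hα' : HasDerivAt α (c * α t) t := by
    rw [hαe]
    have h0 : HasDerivAt (fun t' : ℝ => c * t') (c * 1) t := (hasDerivAt_id t).const_mul c
    have := (h0.exp).const_mul (x + PT)
    refine this.congr_deriv ?_
    beta_reduce
    ring
  -- derivative of β
  have hβ' : HasDerivAt β (-(κ * β t + 1)) t := by
    have h0 : HasDerivAt (fun t' : ℝ => κ * (T - t')) (κ * (0 - 1)) t :=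
      ((hasDerivAt_const t T).sub (hasDerivAt_id t)).const_mul κ
    have h1 := (h0.exp.sub_const 1).div_const κ
    rw [hαe, hβe] at *
    refine h1.congr_deriv ?_
    beta_reduce
    field_simp
    ring
  -- time derivative of f
  have hdt : deriv (fun t' => f t' h e) t = c * α t * h ^ p + (κ * β t + 1) * (e * h) := by
    have : HasDerivAt (fun t' => f t' h e)
        (c * α t * h ^ p - (-(κ * β t + 1)) * e * h) t := by
      simp only [hf]
      exact (hα'.mul_const (h ^ p)).sub ((hβ'.mul_const e).mul_const h)
    rw [this.deriv]; ring
  -- h-derivative of f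
  have hdh : ∀ (e' h' : ℝ), 0 < h' →
      HasDerivAt (fun h'' => f t h'' e') (α t * (p * h' ^ (p - 1)) - β t * e') h' := by
    intro e' h' hh'
    simp only [hf]
    have h1 := (Real.hasDerivAt_rpow_const (x := h') (p := p) (Or.inl hh'.ne')).const_mul (α t)
    have h2 : HasDerivAt (fun h'' : ℝ => β t * e' * h'') (β t * e' * 1) h' :=
      (hasDerivAt_id h').const_mul (β t * e')
    refine (h1.sub h2).congr_deriv ?_
    ring
  -- second h-derivative
  have hddh : deriv (fun h' => deriv (fun h'' => f t h'' e) h') h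
      = α t * (p * ((p - 1) * h ^ (p - 2))) := by
    have hev : (fun h' => deriv (fun h'' => f t h'' e) h')
        =ᶠ[nhds h] (fun h' => α t * (p * h' ^ (p - 1)) - β t * e) := by
      filter_upwards [Ioi_mem_nhds hh] with h' hh'
      exact (hdh e h' hh').deriv
    rw [hev.deriv_eq]
    have h1 := ((Real.hasDerivAt_rpow_const (x := h) (p := p - 1)
      (Or.inl hh.ne')).const_mul p).const_mul (α t)
    have h2 := (h1.sub_const (β t * e)).deriv
    rw [h2]
    ring_nf
  -- e-derivative of f
  have hde : ∀ e' : ℝ, HasDerivAt (fun e'' => f t h e'') (-(β t * h)) e' := by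
    intro e'
    simp only [hf]
    have h2 : HasDerivAt (fun e'' : ℝ => β t * e'' * h) (β t * 1 * h) e' :=
      ((hasDerivAt_id e').const_mul (β t)).mul_const h
    have := (hasDerivAt_const e' (α t * h ^ p)).sub h2
    refine this.congr_deriv ?_
    ring
  -- second e-derivative is zero
  have hdde : deriv (fun e' => deriv (fun e'' => f t h e'') e') e = 0 := by
    have : (fun e' => deriv (fun e'' => f t h e'') e') = fun _ => -(β t * h) :=
      funext fun e' => (hde e').deriv
    rw [this, deriv_const]
  -- mixed derivative
  have hdm : deriv (fun e' => deriv (fun h' => f t h' e') h) e = -β t := by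
    have h0 : (fun e' => deriv (fun h' => f t h' e') h)
        = fun e' => α t * (p * h ^ (p - 1)) - β t * e' :=
      funext fun e' => (hdh e' h hh).deriv
    rw [h0]
    have h2 : HasDerivAt (fun e' : ℝ => β t * e') (β t * 1) e :=
      (hasDerivAt_id e).const_mul (β t)
    have := ((hasDerivAt_const e (α t * (p * h ^ (p - 1)))).sub h2).deriv
    erw [this]; ring
  have hdhval : deriv (fun h' => f t h' e) h = α t * (p * h ^ (p - 1)) - β t * e :=
    (hdh e h hh).deriv
  have hdeval : deriv (fun e' => f t h e') e = -(β t * h) := (hde e).deriv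
  -- rpow algebra
  have e1 : h ^ (p - 1) = h ^ p / h := by
    rw [Real.rpow_sub hh, Real.rpow_one]
  have e2 : h ^ (p - 2) = h ^ p / h ^ 2 := by
    rw [Real.rpow_sub hh, show ((2:ℝ)) = ((2:ℕ):ℝ) by norm_num, Real.rpow_natCast]
  constructor
  · rw [hdt, hdhval, hdeval, hddh, hdde, hdm, e1, e2, hpdef, hcdef, hkdef]
    field_simp
    ring
  · rw [hdhval, hdeval, e1, hpdef]
    field_simp
    ring
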